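/- Let R be a commutative ring. For every sequence (m_n)_{n≥1} in R there exists a unique sequence (κ_n)_{n≥1} in R (the free cumulants) such that for all n ≥ 1, m_n = Σ_{π ∈ NC(n)} ∏_{V ∈ π} κ_{|V|}, where the sum runs over all non-crossing partitions π of {1,…,n} and |V| denotes the cardinality of the block V. -/
import Mathlib


/-- `P` is a partition of `Fin n` (presented as its finite set of blocks):
every block is nonempty and every point lies in a unique block. -/
def IsPartitionOn (n : ℕ) (P : Finset (Finset (Fin n))) : Prop :=
  (∀ B ∈ P, B.Nonempty) ∧ ∀ x : Fin n, ∃! B, B ∈ P ∧ x ∈ B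

/-- A family of blocks in a linearly ordered type is non-crossing if there are no
`a < b < c < d` with `a, c` in one block and `b, d` in a different block. -/
def IsNonCrossing {α : Type*} [LinearOrder α] (P : Finset (Finset α)) : Prop :=
  ¬ ∃ (a b c d : α) (B C : Finset α), B ∈ P ∧ C ∈ P ∧ B ≠ C ∧
      a < b ∧ b < c ∧ c < d ∧ a ∈ B ∧ c ∈ B ∧ b ∈ C ∧ d ∈ C

open scoped Classical in
/-- The finite set `NC(n)` of all non-crossing partitions of `{1,…,n}`. -/
noncomputable def NCFinset (n : ℕ) : Finset (Finset (Finset (Fin n))) :=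
  Finset.univ.filter fun P => IsPartitionOn n P ∧ IsNonCrossing P


lemma mem_NCFinset {n : ℕ} {P : Finset (Finset (Fin n))} :
    P ∈ NCFinset n ↔ IsPartitionOn n P ∧ IsNonCrossing P := by
  classical
  simp [NCFinset]

lemma univPart_mem_NCFinset {n : ℕ} (hn : 1 ≤ n) :
    ({Finset.univ} : Finset (Finset (Fin n))) ∈ NCFinset n := by
  have : Nonempty (Fin n) := ⟨⟨0, hn⟩⟩
  refine mem_NCFinset.mpr ⟨⟨?_, ?_⟩, ?_⟩
  · intro B hB
    rw [Finset.mem_singleton] at hB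
    subst hB
    exact Finset.univ_nonempty
  · intro x
    refine ⟨Finset.univ, ⟨Finset.mem_singleton_self _, Finset.mem_univ x⟩, ?_⟩
    rintro C ⟨hC, -⟩
    exact Finset.mem_singleton.mp hC
  · rintro ⟨a, b, c, d, B, C, hB, hC, hBC, -⟩
    exact hBC ((Finset.mem_singleton.mp hB).trans (Finset.mem_singleton.mp hC).symm)

lemma block_card_pos {n : ℕ} {P : Finset (Finset (Fin n))} (hP : P ∈ NCFinset n)
    {B : Finset (Fin n)} (hB : B ∈ P) : 0 < B.card :=
  Finset.card_pos.mpr ((mem_NCFinset.mp hP).1.1 B hB)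

lemma block_card_lt {n : ℕ} {P : Finset (Finset (Fin n))} (hP : P ∈ NCFinset n)
    (hne : P ≠ {Finset.univ}) {B : Finset (Fin n)} (hB : B ∈ P) : B.card < n := by
  have hpart : IsPartitionOn n P := (mem_NCFinset.mp hP).1
  have hle : B.card ≤ n := by simpa using B.card_le_univ
  rcases lt_or_eq_of_le hle with h | h
  · exact h
  · exfalso
    have hBuniv : B = Finset.univ := Finset.eq_univ_of_card B (by simp [h])
    apply hne
    refine Finset.eq_singleton_iff_unique_mem.mpr ⟨hBuniv ▸ hB, ?_⟩
    intro C hC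
    obtain ⟨x, hx⟩ := hpart.1 C hC
    obtain ⟨D, -, hDu⟩ := hpart.2 x
    have h1 := hDu C ⟨hC, hx⟩
    have h2 := hDu Finset.univ ⟨hBuniv ▸ hB, Finset.mem_univ x⟩
    rw [h1, h2]

/-- The free cumulants, defined by strong recursion from the moments. -/
noncomputable def kappa (R : Type*) [CommRing R] (m : ℕ → R) : ℕ → R
  | n => m n - ∑ P ∈ (NCFinset n).erase {Finset.univ}, ∏ B ∈ P,
      if h : B.card < n then kappa R m B.card else 0
  termination_by n => n
  decreasing_by exact h

lemma kappa_eq (R : Type*) [CommRing R] (m : ℕ → R) (n : ℕ) :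
    kappa R m n = m n - ∑ P ∈ (NCFinset n).erase {Finset.univ}, ∏ B ∈ P,
      kappa R m B.card := by
  rw [kappa]
  congr 1
  refine Finset.sum_congr rfl fun P hP => Finset.prod_congr rfl fun B hB => ?_
  rw [dif_pos (block_card_lt (Finset.mem_of_mem_erase hP) (Finset.ne_of_mem_erase hP) hB)]

lemma kappa_moment (R : Type*) [CommRing R] (m : ℕ → R) (n : ℕ) (hn : 1 ≤ n) :
    m n = ∑ P ∈ NCFinset n, ∏ B ∈ P, kappa R m B.card := by
  rw [← Finset.add_sum_erase _ _ (univPart_mem_NCFinset hn)]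
  have h1 : ∏ B ∈ ({Finset.univ} : Finset (Finset (Fin n))), kappa R m B.card
      = kappa R m n := by simp
  rw [h1, kappa_eq]
  ring

/-- **Existence and uniqueness of free cumulants.** Over a commutative ring `R`,
for every sequence `(m_n)_{n ≥ 1}` there is a sequence `(κ_n)_{n ≥ 1}`, unique in
degrees `n ≥ 1`, satisfying the free moment–cumulant formula
`m_n = Σ_{π ∈ NC(n)} Π_{V ∈ π} κ_{|V|}` for all `n ≥ 1`. -/
theorem free_cumulants_exist_unique (R : Type*) [CommRing R] (m : ℕ → R) :
    ∃ κ : ℕ → R,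
      (∀ n, 1 ≤ n → m n = ∑ P ∈ NCFinset n, ∏ B ∈ P, κ B.card) ∧
      ∀ κ' : ℕ → R,
        (∀ n, 1 ≤ n → m n = ∑ P ∈ NCFinset n, ∏ B ∈ P, κ' B.card) →
        ∀ n, 1 ≤ n → κ' n = κ n := by
  refine ⟨kappa R m, fun n hn => kappa_moment R m n hn, ?_⟩
  intro κ' hκ' n
  induction n using Nat.strong_induction_on with
  | _ n ih =>
    intro hn
    have h1 := hκ' n hn
    have h2 := kappa_moment R m n hn
    rw [← Finset.add_sum_erase _ _ (univPart_mem_NCFinset hn)] at h1 h2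
    simp only [Finset.prod_singleton, Finset.card_univ, Fintype.card_fin] at h1 h2
    have hs : ∑ P ∈ (NCFinset n).erase {Finset.univ}, ∏ B ∈ P, κ' B.card
        = ∑ P ∈ (NCFinset n).erase {Finset.univ}, ∏ B ∈ P, kappa R m B.card := by
      refine Finset.sum_congr rfl fun P hP => Finset.prod_congr rfl fun B hB => ?_
      have hPm := Finset.mem_of_mem_erase hP
      exact ih B.card (block_card_lt hPm (Finset.ne_of_mem_erase hP) hB)
        (block_card_pos hPm hB)
    rw [hs] at h1
    exact add_right_cancel (h1.symm.trans h2)
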